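/- There exists a universal constant $C''' > 0$ such that the following holds. Let $0 < s < n$ be integers with $s$ even and $n > 2s$, let $\epsilon \in (0,1)$, let $U_{s/2} := \{x \in \mathbb{R}^n : x \text{ has at most } s/2 \text{ nonzero coordinates and } \|x\|_2 \le 1\}$, and let $f : U_{s/2} \to \mathbb{R}^m$ satisfy $\sqrt{1-\epsilon}\,\|x-y\|_2 \le \|f(x) - f(y)\|_2 \le \sqrt{1+\epsilon}\,\|x-y\|_2$ for all $x, y \in U_{s/2}$. Then $m \ge C''' \frac{1-\epsilon}{1+\epsilon}\, s \log\left(\frac{n}{2s}\right)$. -/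

import Mathlib

open Finset MeasureTheory Metric
open scoped ENNReal

lemma choose_mono_left {n : ℕ} {i q : ℕ} (hi : i ≤ q) (hq : q ≤ n/2) :
    Nat.choose n i ≤ Nat.choose n q := by
  induction q with
  | zero => interval_cases i; rfl
  | succ p ih =>
    rcases Nat.lt_or_ge i (p+1) with h | h
    · exact le_trans (ih (by omega) (by omega)) (Nat.choose_le_succ_of_lt_half_left (by omega))
    · have : i = p + 1 := by omega
      subst this; rfl

lemma inter_union_sdiff' {α : Type*} [DecidableEq α] (a S : Finset α) : a ∩ S ∪ a \ S = a := by
  ext x; simp only [mem_union, mem_inter, mem_sdiff]; tauto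

lemma bad_bound (n k : ℕ) (hk : 0 < k) (hn : 4*k < n) (S : Finset (Fin n)) (hS : S.card = k) :
    ((univ : Finset (Fin n)).powersetCard k |>.filter (fun T => 3*k < 4*(S ∩ T).card)).card
      ≤ 2^k * Nat.choose n (k/4) := by
  classical
  set q := k / 4 with hq
  have hinj : ((univ : Finset (Fin n)).powersetCard k |>.filter (fun T => 3*k < 4*(S ∩ T).card)).card
      ≤ ((Finset.range (q+1)).biUnion (fun i => (S.powersetCard (k-i)) ×ˢ ((univ : Finset (Fin n)).powersetCard i))).card := by
    apply Finset.card_le_card_of_injOn (fun T => (T ∩ S, T \ S))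
    · intro T hT
      simp only [mem_coe, mem_filter, mem_powersetCard, subset_univ, true_and] at hT
      obtain ⟨hTk, hST⟩ := hT
      have h1 : (T ∩ S).card + (T \ S).card = k := by
        rw [Finset.card_inter_add_card_sdiff]; exact hTk
      have h1' : (S ∩ T).card = (T ∩ S).card := by rw [inter_comm]
      have hi : (T \ S).card ≤ q := by omega
      simp only [mem_coe, mem_biUnion, mem_range]
      refine ⟨(T \ S).card, by omega, ?_⟩
      simp only [mem_product, mem_powersetCard, subset_univ, true_and]
      exact ⟨⟨inter_subset_right, by omega⟩, trivial⟩
    · intro a ha b hb hab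
      simp only [Prod.mk.injEq] at hab
      rw [← inter_union_sdiff' a S, ← inter_union_sdiff' b S, hab.1, hab.2]
  refine hinj.trans ?_
  refine (Finset.card_biUnion_le).trans ?_
  have hstep : ∀ i ∈ Finset.range (q+1),
      ((S.powersetCard (k-i)) ×ˢ ((univ : Finset (Fin n)).powersetCard i)).card
        ≤ Nat.choose k (k-i) * Nat.choose n q := by
    intro i hi
    rw [Finset.card_product, Finset.card_powersetCard, Finset.card_powersetCard, hS, card_univ, Fintype.card_fin]
    apply Nat.mul_le_mul_left
    simp only [mem_range] at hi
    exact choose_mono_left (by omega) (by omega)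
  refine (Finset.sum_le_sum hstep).trans ?_
  rw [← Finset.sum_mul]
  apply Nat.mul_le_mul_right
  have : ∑ i ∈ Finset.range (q+1), Nat.choose k (k-i)
      = ∑ j ∈ (Finset.range (q+1)).image (fun i => k - i), Nat.choose k j := by
    rw [Finset.sum_image]
    intro a ha b hb hab
    simp only [mem_coe, mem_range] at ha hb hab
    omega
  rw [this]
  calc ∑ j ∈ (Finset.range (q+1)).image (fun i => k - i), Nat.choose k j
      ≤ ∑ j ∈ Finset.range (k+1), Nat.choose k j := by
        apply Finset.sum_le_sum_of_subset
        intro j hj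
        simp only [mem_image, mem_range] at hj ⊢
        omega
    _ = 2^k := Nat.sum_range_choose k

lemma gv_family (n k : ℕ) (hk : 0 < k) (hn : 4*k < n) :
    ∃ 𝒜 : Finset (Finset (Fin n)),
      (∀ T ∈ 𝒜, T.card = k) ∧
      (∀ T ∈ 𝒜, ∀ T' ∈ 𝒜, T ≠ T' → 4 * (T ∩ T').card ≤ 3*k) ∧
      Nat.choose n k ≤ 𝒜.card * (2^k * Nat.choose n (k/4)) := by
  classical
  set P : Finset (Finset (Fin n)) → Prop :=
    fun 𝒜 => (∀ T ∈ 𝒜, T.card = k) ∧ (∀ T ∈ 𝒜, ∀ T' ∈ 𝒜, T ≠ T' → 4 * (T ∩ T').card ≤ 3*k)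
    with hP
  have hne : ((univ : Finset (Finset (Finset (Fin n)))).filter P).Nonempty := by
    refine ⟨∅, ?_⟩
    simp only [mem_filter, mem_univ, true_and, hP]
    exact ⟨fun T hT => absurd hT (Finset.notMem_empty T),
      fun T hT => absurd hT (Finset.notMem_empty T)⟩
  obtain ⟨𝒜, h𝒜mem, h𝒜max⟩ := Finset.exists_max_image _ Finset.card hne
  simp only [mem_filter, mem_univ, true_and, hP] at h𝒜mem
  refine ⟨𝒜, h𝒜mem.1, h𝒜mem.2, ?_⟩
  have hcover : ∀ S ∈ (univ : Finset (Fin n)).powersetCard k,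
      ∃ T ∈ 𝒜, 3*k < 4*(T ∩ S).card := by
    intro S hSmem
    simp only [mem_powersetCard, subset_univ, true_and] at hSmem
    by_contra hcon
    push_neg at hcon
    have hSnot : S ∉ 𝒜 := by
      intro hmem
      have := hcon S hmem
      rw [Finset.inter_self, hSmem] at this
      omega
    have hP' : P (insert S 𝒜) := by
      constructor
      · intro T hT
        rcases Finset.mem_insert.1 hT with h | h
        · rw [h]; exact hSmem
        · exact h𝒜mem.1 T h
      · intro T hT T' hT' hne'
        rcases Finset.mem_insert.1 hT with h | h <;> rcases Finset.mem_insert.1 hT' with h' | h'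
        · exact absurd (h.trans h'.symm) hne'
        · subst h
          have := hcon T' h'
          rw [inter_comm] at this
          omega
        · subst h'
          have := hcon T h
          omega
        · exact h𝒜mem.2 T h T' h' hne'
    have hcard : 𝒜.card < (insert S 𝒜).card := by
      rw [Finset.card_insert_of_notMem hSnot]; omega
    have := h𝒜max (insert S 𝒜) (by simp only [mem_filter, mem_univ, true_and]; exact hP')
    omega
  have hsub : (univ : Finset (Fin n)).powersetCard k
      ⊆ 𝒜.biUnion (fun T => (univ : Finset (Fin n)).powersetCard k |>.filter (fun S => 3*k < 4*(T ∩ S).card)) := by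
    intro S hS
    obtain ⟨T, hT, hbad⟩ := hcover S hS
    exact Finset.mem_biUnion.2 ⟨T, hT, Finset.mem_filter.2 ⟨hS, hbad⟩⟩
  calc Nat.choose n k = ((univ : Finset (Fin n)).powersetCard k).card := by
        rw [Finset.card_powersetCard, card_univ, Fintype.card_fin]
    _ ≤ (𝒜.biUnion (fun T => (univ : Finset (Fin n)).powersetCard k |>.filter (fun S => 3*k < 4*(T ∩ S).card))).card :=
        Finset.card_le_card hsub
    _ ≤ ∑ T ∈ 𝒜, ((univ : Finset (Fin n)).powersetCard k |>.filter (fun S => 3*k < 4*(T ∩ S).card)).card :=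
        Finset.card_biUnion_le
    _ ≤ ∑ T ∈ 𝒜, 2^k * Nat.choose n (k/4) := by
        apply Finset.sum_le_sum
        intro T hT
        exact bad_bound n k hk hn T (h𝒜mem.1 T hT)
    _ = 𝒜.card * (2^k * Nat.choose n (k/4)) := by rw [Finset.sum_const, smul_eq_mul]

lemma choose_ratio_aux (n k q : ℕ) (hk : k ≤ n) :
    ∀ d, q + d ≤ k → (n-k)^d * Nat.choose n q ≤ k^d * Nat.choose n (q+d) := by
  intro d
  induction d with
  | zero => intro _; simp
  | succ e ih =>
    intro hd
    have ihe := ih (by omega)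
    have key : (n - k) * Nat.choose n (q+e) ≤ k * Nat.choose n (q+e+1) := by
      have hid := Nat.choose_succ_right_eq n (q+e)
      have h1 : (n - k) * Nat.choose n (q+e) ≤ (n - (q+e)) * Nat.choose n (q+e) :=
        Nat.mul_le_mul_right _ (by omega)
      have h2 : (n - (q+e)) * Nat.choose n (q+e) = (q+e+1) * Nat.choose n (q+e+1) := by
        rw [mul_comm, ← hid, mul_comm]
      have h3 : (q+e+1) * Nat.choose n (q+e+1) ≤ k * Nat.choose n (q+e+1) :=
        Nat.mul_le_mul_right _ (by omega)
      omega
    calc (n-k)^(e+1) * Nat.choose n q = (n-k) * ((n-k)^e * Nat.choose n q) := by ring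
      _ ≤ (n-k) * (k^e * Nat.choose n (q+e)) := Nat.mul_le_mul_left _ ihe
      _ = k^e * ((n-k) * Nat.choose n (q+e)) := by ring
      _ ≤ k^e * (k * Nat.choose n (q+e+1)) := Nat.mul_le_mul_left _ key
      _ = k^(e+1) * Nat.choose n (q+e+1) := by ring

lemma packing_bound {m : ℕ} {ι : Type*} (P : Finset ι) (y : ι → EuclideanSpace ℝ (Fin m))
    (d R : ℝ) (hd : 0 < d) (hR : 0 ≤ R)
    (hsep : ∀ i ∈ P, ∀ j ∈ P, i ≠ j → d ≤ dist (y i) (y j))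
    (z : EuclideanSpace ℝ (Fin m)) (hz : ∀ i ∈ P, dist (y i) z ≤ R) :
    (P.card : ℝ) ≤ ((2*R + d)/d)^m := by
  classical
  rcases Nat.eq_zero_or_pos m with hm | hm
  · subst hm
    have hsub : Subsingleton (EuclideanSpace ℝ (Fin 0)) :=
      ⟨fun a b => PiLp.ext (fun i => Fin.elim0 i)⟩
    have hcard : P.card ≤ 1 := by
      apply Finset.card_le_one.2
      intro a ha b hb
      by_contra hab
      have := hsep a ha b hb hab
      rw [hsub.elim (y a) (y b), dist_self] at this
      linarith
    simpa using (by exact_mod_cast hcard : (P.card : ℝ) ≤ 1)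
  · have : Nontrivial (EuclideanSpace ℝ (Fin m)) := by
      refine ⟨EuclideanSpace.single ⟨0, hm⟩ (1:ℝ), 0, ?_⟩
      intro h
      have := congrArg (fun v => v ⟨0, hm⟩) h
      simp [EuclideanSpace.single] at this
    set μB := volume (ball (0 : EuclideanSpace ℝ (Fin m)) 1) with hμB
    have hμB0 : μB ≠ 0 := (measure_ball_pos volume 0 one_pos).ne'
    have hμBt : μB ≠ ⊤ := measure_ball_lt_top.ne
    have hballvol : ∀ (x : EuclideanSpace ℝ (Fin m)) (r : ℝ), 0 ≤ r →
        volume (ball x r) = ENNReal.ofReal (r ^ m) * μB := by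
      intro x r hr
      rw [hμB, Measure.addHaar_ball _ _ hr, finrank_euclideanSpace_fin]
    have hdisj : (↑P : Set ι).PairwiseDisjoint (fun i => ball (y i) (d/2)) := by
      intro i hi j hj hij
      apply ball_disjoint_ball
      rw [show d/2 + d/2 = d by ring]
      exact hsep i hi j hj hij
    have hmeas : ∀ i ∈ P, MeasurableSet (ball (y i) (d/2)) :=
      fun i _ => measurableSet_ball
    have hunion : (⋃ i ∈ P, ball (y i) (d/2)) ⊆ ball z (R + d/2) := by
      intro x hx
      simp only [Set.mem_iUnion] at hx
      obtain ⟨i, hi, hxi⟩ := hx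
      rw [mem_ball] at hxi ⊢
      calc dist x z ≤ dist x (y i) + dist (y i) z := dist_triangle _ _ _
        _ < d/2 + R := by have := hz i hi; linarith
        _ = R + d/2 := by ring
    have hle : (P.card : ℝ≥0∞) * (ENNReal.ofReal ((d/2) ^ m) * μB)
        ≤ ENNReal.ofReal ((R + d/2) ^ m) * μB := by
      calc (P.card : ℝ≥0∞) * (ENNReal.ofReal ((d/2) ^ m) * μB)
          = ∑ i ∈ P, volume (ball (y i) (d/2)) := by
            rw [Finset.sum_congr rfl (fun i _ => hballvol (y i) (d/2) (by linarith)),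
              Finset.sum_const, nsmul_eq_mul]
        _ = volume (⋃ i ∈ P, ball (y i) (d/2)) := (measure_biUnion_finset hdisj hmeas).symm
        _ ≤ volume (ball z (R + d/2)) := measure_mono hunion
        _ = ENNReal.ofReal ((R + d/2) ^ m) * μB := hballvol z (R + d/2) (by linarith)
    rw [← mul_assoc] at hle
    have hle2 : (P.card : ℝ≥0∞) * ENNReal.ofReal ((d/2) ^ m)
        ≤ ENNReal.ofReal ((R + d/2) ^ m) :=
      (ENNReal.mul_le_mul_iff_left hμB0 hμBt).1 hle
    have hdm : (0:ℝ) < (d/2) ^ m := by positivity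
    have hreal : (P.card : ℝ) * (d/2) ^ m ≤ (R + d/2) ^ m := by
      have h1 : ((P.card : ℝ≥0∞) * ENNReal.ofReal ((d/2) ^ m)).toReal
          ≤ (ENNReal.ofReal ((R + d/2) ^ m)).toReal := by
        apply ENNReal.toReal_mono ENNReal.ofReal_ne_top hle2
      rw [ENNReal.toReal_mul, ENNReal.toReal_natCast, ENNReal.toReal_ofReal hdm.le,
        ENNReal.toReal_ofReal (by positivity)] at h1
      exact h1
    rw [← le_div_iff₀ hdm] at hreal
    calc (P.card : ℝ) ≤ (R + d/2)^m / (d/2)^m := hreal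
      _ = ((2*R + d)/d)^m := by
          rw [← div_pow]
          congr 1
          field_simp

noncomputable def xvec (n k : ℕ) (T : Finset (Fin n)) : EuclideanSpace ℝ (Fin n) :=
  WithLp.toLp 2 (fun i => if i ∈ T then (Real.sqrt k)⁻¹ else 0)

lemma xvec_empty (n k : ℕ) : xvec n k ∅ = 0 := by
  ext i; simp [xvec]

lemma xvec_support (n k : ℕ) (hk : 0 < k) (T : Finset (Fin n)) :
    {i : Fin n | xvec n k T i ≠ 0} = ↑T := by
  ext i
  simp only [Set.mem_setOf_eq, xvec, PiLp.toLp_apply, Finset.coe_mem, Finset.mem_coe]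
  constructor
  · intro h
    by_contra hi
    simp [hi] at h
  · intro h
    simp only [h, if_true]
    positivity

lemma xvec_normsq (n k : ℕ) (hk : 0 < k) (T T' : Finset (Fin n)) :
    ‖xvec n k T - xvec n k T'‖^2 = (((T \ T').card + (T' \ T).card : ℕ) : ℝ) / k := by
  classical
  have hkR : (0:ℝ) < k := by exact_mod_cast hk
  rw [EuclideanSpace.norm_eq, Real.sq_sqrt (by positivity)]
  have hterm : ∀ i : Fin n, ‖(xvec n k T - xvec n k T') i‖^2
      = if i ∈ (T \ T') ∪ (T' \ T) then ((k:ℝ))⁻¹ else 0 := by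
    intro i
    have hc : ((Real.sqrt k)⁻¹)^2 = ((k:ℝ))⁻¹ := by
      rw [inv_pow, Real.sq_sqrt hkR.le]
    have : (xvec n k T - xvec n k T') i = xvec n k T i - xvec n k T' i := rfl
    rw [this]
    simp only [xvec, PiLp.toLp_apply, Finset.mem_union, Finset.mem_sdiff]
    by_cases h1 : i ∈ T <;> by_cases h2 : i ∈ T' <;>
      simp [h1, h2, Real.norm_eq_abs, sq_abs, hc]
  rw [Finset.sum_congr rfl (fun i _ => hterm i), Finset.sum_ite_mem, Finset.univ_inter,
    Finset.sum_const, nsmul_eq_mul]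
  rw [Finset.card_union_of_disjoint]
  · rw [div_eq_mul_inv]
  · exact disjoint_sdiff_sdiff

set_option maxHeartbeats 1000000 in


/-- RIP-style lower bound: any (possibly nonlinear) map `f : U_{s/2} → ℝ^m` with
`√(1±ε)`-distortion on the `(s/2)`-sparse vectors of norm at most one must have
`m ≥ C''' ((1-ε)/(1+ε)) s log(n/2s)`. -/
theorem sparse_vectors_embedding_dimension_lower_bound :
    ∃ C''' : ℝ, 0 < C''' ∧
    ∀ (s n m : ℕ), 0 < s → s < n → Even s → 2 * s < n →
    ∀ ε : ℝ, 0 < ε → ε < 1 →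
    ∀ f : EuclideanSpace ℝ (Fin n) → EuclideanSpace ℝ (Fin m),
      (∀ x ∈ {x : EuclideanSpace ℝ (Fin n) | {i : Fin n | x i ≠ 0}.ncard ≤ s / 2 ∧ ‖x‖ ≤ 1},
       ∀ y ∈ {x : EuclideanSpace ℝ (Fin n) | {i : Fin n | x i ≠ 0}.ncard ≤ s / 2 ∧ ‖x‖ ≤ 1},
        Real.sqrt (1 - ε) * ‖x - y‖ ≤ ‖f x - f y‖ ∧
          ‖f x - f y‖ ≤ Real.sqrt (1 + ε) * ‖x - y‖) →
      C''' * ((1 - ε) / (1 + ε)) * (s : ℝ) * Real.log ((n : ℝ) / (2 * s)) ≤ (m : ℝ) := by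
  classical
  refine ⟨3/40, by norm_num, ?_⟩
  intro s n m hs hsn hse h2s ε hε0 hε1 f hf
  obtain ⟨c, hc⟩ := hse
  set k := s / 2 with hkdef
  have hs2 : s = 2 * k := by omega
  have hk1 : 0 < k := by omega
  have h4k : 4 * k < n := by omega
  have hkR : (0:ℝ) < k := by exact_mod_cast hk1
  have h4kR : 4*(k:ℝ) < n := by exact_mod_cast h4k
  -- membership in U
  have hnorm1 : ∀ T : Finset (Fin n), T.card = k → ‖xvec n k T‖ = 1 := by
    intro T hT
    have h := xvec_normsq n k hk1 T ∅
    rw [xvec_empty, sub_zero] at h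
    simp only [Finset.sdiff_empty, Finset.empty_sdiff, Finset.card_empty, Nat.add_zero, hT] at h
    have h1 : ‖xvec n k T‖^2 = 1 := by rw [h]; field_simp
    nlinarith [norm_nonneg (xvec n k T)]
  have hmem : ∀ T : Finset (Fin n), T.card = k →
      xvec n k T ∈ {x : EuclideanSpace ℝ (Fin n) | {i : Fin n | x i ≠ 0}.ncard ≤ k ∧ ‖x‖ ≤ 1} := by
    intro T hT
    constructor
    · rw [xvec_support n k hk1 T, Set.ncard_coe_finset, hT]
    · rw [hnorm1 T hT]
  have hmem0 : (0 : EuclideanSpace ℝ (Fin n)) ∈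
      {x : EuclideanSpace ℝ (Fin n) | {i : Fin n | x i ≠ 0}.ncard ≤ k ∧ ‖x‖ ≤ 1} := by
    constructor
    · simp
    · simp
  obtain ⟨𝒜, hcardA, hsepA, hcount⟩ := gv_family n k hk1 h4k
  set d : ℝ := Real.sqrt ((1-ε)/2) with hd
  have hd0 : 0 < d := Real.sqrt_pos.2 (by linarith)
  set R : ℝ := Real.sqrt (1+ε) with hRdef
  have hR0 : 0 ≤ R := Real.sqrt_nonneg _
  have hpack : (𝒜.card : ℝ) ≤ ((2*R + d)/d)^m := by
    apply packing_bound 𝒜 (fun T => f (xvec n k T)) d R hd0 hR0 ?_ (f 0) ?_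
    · intro T hT T' hT' hne
      rw [dist_eq_norm]
      have hlow := (hf _ (hmem T (hcardA T hT)) _ (hmem T' (hcardA T' hT'))).1
      have hsep' := hsepA T hT T' hT' hne
      have hsq := xvec_normsq n k hk1 T T'
      have hcd : k ≤ 2 * ((T \ T').card + (T' \ T).card) := by
        have h1 := Finset.card_sdiff_add_card_inter T T'
        have h2 := Finset.card_sdiff_add_card_inter T' T
        rw [Finset.inter_comm T' T] at h2
        have hc1 := hcardA T hT
        have hc2 := hcardA T' hT'
        omega
      have hlow2 : Real.sqrt (1/2) ≤ ‖xvec n k T - xvec n k T'‖ := by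
        rw [← Real.sqrt_sq (norm_nonneg (xvec n k T - xvec n k T')), hsq]
        apply Real.sqrt_le_sqrt
        rw [le_div_iff₀ hkR]
        have hcast : (k:ℝ) ≤ 2 * (((T \ T').card + (T' \ T).card : ℕ):ℝ) := by
          exact_mod_cast hcd
        linarith
      calc d = Real.sqrt ((1-ε) * (1/2)) := by rw [hd]; congr 1; ring
        _ = Real.sqrt (1-ε) * Real.sqrt (1/2) := Real.sqrt_mul (by linarith) _
        _ ≤ Real.sqrt (1-ε) * ‖xvec n k T - xvec n k T'‖ :=
              mul_le_mul_of_nonneg_left hlow2 (Real.sqrt_nonneg _)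
        _ ≤ ‖f (xvec n k T) - f (xvec n k T')‖ := hlow
    · intro T hT
      rw [dist_eq_norm]
      have hup := (hf _ (hmem T (hcardA T hT)) _ hmem0).2
      rw [sub_zero] at hup
      calc ‖f (xvec n k T) - f 0‖ ≤ Real.sqrt (1+ε) * ‖xvec n k T‖ := hup
        _ = R := by rw [hnorm1 T (hcardA T hT), mul_one]
  -- 𝒜 is nonempty
  have hA1 : 1 ≤ 𝒜.card := by
    by_contra h
    have h0 : 𝒜.card = 0 := by omega
    rw [h0, zero_mul] at hcount
    have := Nat.choose_pos (show k ≤ n by omega)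
    omega
  have hNr1 : (1:ℝ) ≤ (𝒜.card : ℝ) := by exact_mod_cast hA1
  set q := k / 4 with hq
  have hnat : (n-k)^(k-q) ≤ k^(k-q) * (𝒜.card * 2^k) := by
    have h1 := choose_ratio_aux n k q (by omega) (k-q) (by omega)
    rw [show q + (k-q) = k by omega] at h1
    have h2 : k^(k-q) * Nat.choose n k ≤ k^(k-q) * (𝒜.card * (2^k * Nat.choose n q)) :=
      Nat.mul_le_mul_left _ hcount
    have hqpos := Nat.choose_pos (show q ≤ n by omega)
    have h3 : (n-k)^(k-q) * Nat.choose n q ≤ (k^(k-q) * (𝒜.card * 2^k)) * Nat.choose n q := by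
      calc (n-k)^(k-q) * Nat.choose n q ≤ k^(k-q) * Nat.choose n k := h1
        _ ≤ k^(k-q) * (𝒜.card * (2^k * Nat.choose n q)) := h2
        _ = (k^(k-q) * (𝒜.card * 2^k)) * Nat.choose n q := by ring
    exact Nat.le_of_mul_le_mul_right h3 hqpos
  have hreal : ((n:ℝ)-k)^(k-q) ≤ (k:ℝ)^(k-q) * ((𝒜.card:ℝ) * 2^k) := by
    have hcast : ((n-k:ℕ):ℝ) = (n:ℝ) - k := by
      rw [Nat.cast_sub (by omega : k ≤ n)]
    calc ((n:ℝ)-k)^(k-q) = (((n-k:ℕ):ℝ))^(k-q) := by rw [hcast]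
      _ ≤ ((k^(k-q) * (𝒜.card * 2^k) : ℕ) : ℝ) := by exact_mod_cast hnat
      _ = (k:ℝ)^(k-q) * ((𝒜.card:ℝ) * 2^k) := by push_cast; ring
  set L : ℝ := Real.log ((n:ℝ)/(2*(s:ℝ))) with hL
  have hsR : (s:ℝ) = 2*(k:ℝ) := by exact_mod_cast hs2
  have h2s4k : (2*(s:ℝ)) = 4*(k:ℝ) := by rw [hsR]; ring
  have hLpos : 0 < L := by
    apply Real.log_pos
    rw [h2s4k, lt_div_iff₀ (by positivity)]
    linarith
  -- lower bound on log of 𝒜.card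
  have hlogN : (3/4) * (k:ℝ) * L ≤ Real.log (𝒜.card : ℝ) := by
    set B : ℝ := ((n:ℝ)-k)/(k:ℝ) with hB
    have hnk : (0:ℝ) < (n:ℝ) - k := by linarith
    have hB0 : 0 < B := by positivity
    have hNlow : B^(k-q) / 2^k ≤ (𝒜.card:ℝ) := by
      rw [div_le_iff₀ (by positivity : (0:ℝ) < (2:ℝ)^k), hB, div_pow,
        div_le_iff₀ (pow_pos hkR (k-q))]
      calc ((n:ℝ)-k)^(k-q) ≤ (k:ℝ)^(k-q) * ((𝒜.card:ℝ) * 2^k) := hreal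
        _ = (𝒜.card:ℝ) * 2^k * (k:ℝ)^(k-q) := by ring
    have hloglow : Real.log (B^(k-q) / 2^k) ≤ Real.log (𝒜.card:ℝ) :=
      Real.log_le_log (div_pos (pow_pos hB0 _) (by positivity)) hNlow
    rw [Real.log_div (ne_of_gt (pow_pos hB0 _)) (by positivity),
      Real.log_pow, Real.log_pow] at hloglow
    have hpos2 : (0:ℝ) < (n:ℝ)/(2*(s:ℝ)) := by rw [h2s4k]; exact div_pos (by linarith) (by linarith)
    have hineq : 3*((n:ℝ)/(2*(s:ℝ))) ≤ B := by
      rw [h2s4k, hB]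
      rw [show (3:ℝ)*((n:ℝ)/(4*(k:ℝ))) = (3*(n:ℝ))/(4*(k:ℝ)) by ring]
      rw [div_le_div_iff₀ (by positivity) hkR]
      nlinarith [h4kR, hkR]
    have hBlog : Real.log 3 + L ≤ Real.log B := by
      rw [hL, ← Real.log_mul (by norm_num) (ne_of_gt hpos2)]
      exact Real.log_le_log (mul_pos (by norm_num) hpos2) hineq
    have hkq : (3/4)*(k:ℝ) ≤ ((k-q:ℕ):ℝ) := by
      have hqk : ((k-q:ℕ):ℝ) = (k:ℝ) - (q:ℝ) := by
        rw [Nat.cast_sub (by omega : q ≤ k)]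
      have hq4 : 4*(q:ℝ) ≤ (k:ℝ) := by exact_mod_cast (by omega : 4*q ≤ k)
      rw [hqk]; linarith
    have hlog32 : 4 * Real.log 2 ≤ 3 * Real.log 3 := by
      have h16 : Real.log 16 ≤ Real.log 27 := Real.log_le_log (by norm_num) (by norm_num)
      rw [show (16:ℝ) = 2^4 by norm_num, show (27:ℝ) = 3^3 by norm_num,
        Real.log_pow, Real.log_pow] at h16
      push_cast at h16
      linarith
    have hBlogpos : 0 ≤ Real.log 3 + L := by
      have := Real.log_pos (by norm_num : (1:ℝ) < 3)
      linarith
    have hprod : (3/4)*(k:ℝ) * (Real.log 3 + L) ≤ ((k-q:ℕ):ℝ) * Real.log B :=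
      mul_le_mul hkq hBlog hBlogpos (le_trans (by linarith) hkq)
    have hkl2 : 0 ≤ (k:ℝ) * (3 * Real.log 3 - 4 * Real.log 2) :=
      mul_nonneg hkR.le (by linarith)
    linarith [hloglow, hprod, hkl2]
  -- upper bound via packing
  set t : ℝ := (1+ε)/(1-ε) with ht
  have ht1 : 1 ≤ t := by
    rw [ht, le_div_iff₀ (by linarith)]; linarith
  have ht0 : 0 < t := by linarith
  have hlogro : Real.log ((2*R+d)/d) ≤ 5*t := by
    set u := Real.sqrt (2*t) with hu
    have hu2 : u^2 = 2*t := Real.sq_sqrt (by linarith)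
    have hu0 : 0 ≤ u := Real.sqrt_nonneg _
    have hRdu : R = d * u := by
      rw [hRdef, hd, hu, ← Real.sqrt_mul (by linarith)]
      congr 1
      have h1e : (1:ℝ) - ε ≠ 0 := by linarith
      rw [ht]
      field_simp
    have hρ : (2*R+d)/d = 2*u + 1 := by
      rw [hRdu]
      field_simp
    rw [hρ]
    have hlog := Real.log_le_sub_one_of_pos (by positivity : (0:ℝ) < 2*u+1)
    nlinarith [sq_nonneg (u-1), hu2, ht1, hlog]
  have hlogN2 : Real.log (𝒜.card:ℝ) ≤ (m:ℝ) * (5*t) := by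
    calc Real.log (𝒜.card:ℝ) ≤ Real.log (((2*R+d)/d)^m) :=
          Real.log_le_log (by linarith) hpack
      _ = (m:ℝ) * Real.log ((2*R+d)/d) := by rw [Real.log_pow]
      _ ≤ (m:ℝ) * (5*t) := mul_le_mul_of_nonneg_left hlogro (by positivity)
  have hcomb : (3/4)*(k:ℝ)*L ≤ (m:ℝ)*(5*t) := le_trans hlogN hlogN2
  have hrat : ((1-ε)/(1+ε))*t = 1 := by
    have h1e : (1:ℝ) - ε ≠ 0 := by linarith
    have h2e : (1:ℝ) + ε ≠ 0 := by linarith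
    rw [ht]
    field_simp
  have heq : (3/40)*((1-ε)/(1+ε))*(s:ℝ)*L * (5*t) = (3/4)*(k:ℝ)*L := by
    have hre : (3/40)*((1-ε)/(1+ε))*(s:ℝ)*L * (5*t) = (3/8)*(s:ℝ)*L*(((1-ε)/(1+ε))*t) := by
      ring
    rw [hre, hrat, hsR]
    ring
  have hfinal : (3/40)*((1-ε)/(1+ε))*(s:ℝ)*L ≤ (m:ℝ) := by
    apply le_of_mul_le_mul_right _ (by positivity : (0:ℝ) < 5*t)
    rw [heq]
    exact hcomb
  exact hfinal
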